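/- The linear system is completely herdable if and only if there exists an entrywise positive vector k in range(C), where C is the controllability matrix. -/

import Mathlib

open MeasureTheory

/-- The state of the LTI system `x' = A x + B u` at time `tf`, starting from `x0`
under the input `u`:  `x(tf) = exp(tf A) x0 + ∫_0^tf exp((tf-τ) A) B u(τ) dτ`. -/
noncomputable def stateAt {n m : ℕ} (A : Matrix (Fin n) (Fin n) ℝ) (B : Matrix (Fin n) (Fin m) ℝ)
    (x0 : Fin n → ℝ) (u : ℝ → Fin m → ℝ) (tf : ℝ) : Fin n → ℝ :=
  (NormedSpace.exp (tf • A)).mulVec x0 +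
    ∫ τ in (0:ℝ)..tf, (NormedSpace.exp ((tf - τ) • A) * B).mulVec (u τ)

/-- The input `u` is admissible (integrable) on `[0, tf]`. -/
def ValidInput {n m : ℕ} (A : Matrix (Fin n) (Fin n) ℝ) (B : Matrix (Fin n) (Fin m) ℝ)
    (tf : ℝ) (u : ℝ → Fin m → ℝ) : Prop :=
  IntervalIntegrable (fun τ => (NormedSpace.exp ((tf - τ) • A) * B).mulVec (u τ)) volume 0 tf

/-- A subset `S` of the states is herdable: from every initial condition and for every
threshold `h ≥ 0` there are a finite time `tf > 0` and an input driving every state in `S`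
at least to `h` at time `tf`. -/
def Herdable {n m : ℕ} (A : Matrix (Fin n) (Fin n) ℝ) (B : Matrix (Fin n) (Fin m) ℝ)
    (S : Set (Fin n)) : Prop :=
  ∀ x0 : Fin n → ℝ, ∀ h : ℝ, 0 ≤ h →
    ∃ tf : ℝ, 0 < tf ∧ ∃ u : ℝ → Fin m → ℝ, ValidInput A B tf u ∧
      ∀ i ∈ S, h ≤ stateAt A B x0 u tf i

/-- The controllability matrix `C = [B, AB, …, A^{n-1} B]`; the column indexed by
`(d, j)` is the `j`-th column of `A^d B`. -/
def ctrb {n m : ℕ} (A : Matrix (Fin n) (Fin n) ℝ) (B : Matrix (Fin n) (Fin m) ℝ) :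
    Matrix (Fin n) (Fin n × Fin m) ℝ := fun i p => (A ^ (p.1 : ℕ) * B) i p.2

namespace HerdThm
variable {n m : ℕ}

attribute [local instance] Matrix.linftyOpSemiNormedRing Matrix.linftyOpNormedRing
  Matrix.linftyOpNormedAlgebra

/-- mulVec by a fixed vector, as a linear map in the matrix. -/
def mulVecRightL (N M' : ℕ) (v : Fin M' → ℝ) : Matrix (Fin N) (Fin M') ℝ →ₗ[ℝ] (Fin N → ℝ) where
  toFun := fun M => M.mulVec v
  map_add' := fun M N => Matrix.add_mulVec M N v
  map_smul' := fun c M => Matrix.smul_mulVec c M v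

def Kspace (A : Matrix (Fin n) (Fin n) ℝ) (B : Matrix (Fin n) (Fin m) ℝ) :
    Submodule ℝ (Fin n → ℝ) := LinearMap.range (Matrix.mulVecLin (ctrb A B))

noncomputable def mulVecRightCLM (z : Fin n → ℝ) :
    Matrix (Fin n) (Fin n) ℝ →L[ℝ] (Fin n → ℝ) :=
  LinearMap.toContinuousLinearMap (mulVecRightL n n z)

@[simp] theorem mulVecRightCLM_apply (z : Fin n → ℝ) (M : Matrix (Fin n) (Fin n) ℝ) :
    mulVecRightCLM z M = M.mulVec z := rfl

theorem exp_mulVec_mem (A : Matrix (Fin n) (Fin n) ℝ) (Z : Submodule ℝ (Fin n → ℝ))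
    (z : Fin n → ℝ) (hz : ∀ k : ℕ, (A ^ k).mulVec z ∈ Z) (s : ℝ) :
    (NormedSpace.exp (s • A)).mulVec z ∈ Z := by
  have hsum : HasSum (fun k : ℕ => (((k.factorial : ℝ))⁻¹ • (s • A) ^ k))
      (NormedSpace.exp (s • A)) := by
    rw [NormedSpace.exp_eq_tsum (𝕂 := ℝ)]
    exact (NormedSpace.expSeries_summable' (𝕂 := ℝ) (s • A)).hasSum
  have h2 := (mulVecRightCLM z).hasSum hsum
  have hcl : IsClosed (Z : Set (Fin n → ℝ)) := Submodule.closed_of_finiteDimensional Z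
  have hmem : ∀ F : Finset ℕ,
      ∑ k ∈ F, (mulVecRightCLM z) (((k.factorial : ℝ))⁻¹ • (s • A) ^ k) ∈ Z := by
    intro F
    refine Submodule.sum_mem Z fun k _ => ?_
    have : (mulVecRightCLM z) (((k.factorial : ℝ))⁻¹ • (s • A) ^ k)
        = (((k.factorial : ℝ))⁻¹ * s ^ k) • (A ^ k).mulVec z := by
      rw [_root_.map_smul, smul_pow, _root_.map_smul, mulVecRightCLM_apply, smul_smul]
    rw [this]
    exact Z.smul_mem _ (hz k)
  exact hcl.mem_of_tendsto h2 (Filter.Eventually.of_forall hmem)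

theorem pow_mul_mulVec_mem (A : Matrix (Fin n) (Fin n) ℝ) (B : Matrix (Fin n) (Fin m) ℝ)
    (d : ℕ) (v : Fin m → ℝ) : ((A ^ d * B).mulVec v) ∈ Kspace A B := by
  rcases Nat.eq_zero_or_pos n with rfl | hn
  · rw [Subsingleton.elim ((A ^ d * B).mulVec v) 0]; exact zero_mem _
  induction d using Nat.strong_induction_on with
  | _ d IH =>
    rcases lt_or_ge d n with hd | hd
    · refine ⟨fun p => if p.1 = ⟨d, hd⟩ then v p.2 else 0, ?_⟩
      funext i
      show ∑ p : Fin n × Fin m, ctrb A B i p * _ = _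
      rw [Fintype.sum_prod_type]
      rw [Finset.sum_eq_single (⟨d, hd⟩ : Fin n)]
      · simp [ctrb, Matrix.mulVec, dotProduct]
      · intro b _ hb
        simp [hb]
      · simp
    · set q : Polynomial ℝ := Polynomial.X ^ n - (Matrix.charpoly A) with hq
      have hdegq : q.natDegree < n := by
        rcases eq_or_ne q 0 with h0 | h0
        · simpa [h0] using hn
        · rw [Polynomial.natDegree_lt_iff_degree_lt h0]
          have h1 : (Polynomial.X ^ n : Polynomial ℝ).degree = (n : ℕ) :=
            Polynomial.degree_X_pow n
          have h2 : (Matrix.charpoly A).degree = (n : ℕ) := by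
            simpa using A.charpoly_degree_eq_dim
          have := Polynomial.degree_sub_lt (h1.trans h2.symm)
            (pow_ne_zero _ Polynomial.X_ne_zero)
            (by simp [Polynomial.Monic.leadingCoeff A.charpoly_monic,
                  (Polynomial.monic_X_pow n).leadingCoeff])
          rw [h1] at this
          exact this
      have hAn : A ^ n = ∑ i ∈ Finset.range n, q.coeff i • A ^ i := by
        have h0 : Polynomial.aeval A q = A ^ n := by
          simp [hq, map_sub, Matrix.aeval_self_charpoly]
        rw [← h0, Polynomial.aeval_eq_sum_range' hdegq]
      have hAd : A ^ d * B = ∑ i ∈ Finset.range n, q.coeff i • (A ^ (d - n + i) * B) := by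
        have hsplit : A ^ d = A ^ (d - n) * A ^ n := by
          rw [← pow_add, Nat.sub_add_cancel hd]
        rw [hsplit, hAn, Finset.mul_sum]
        rw [Matrix.sum_mul]
        refine Finset.sum_congr rfl fun i _ => ?_
        rw [Matrix.mul_smul, Matrix.smul_mul, pow_add, Matrix.mul_assoc]
      have : (A ^ d * B).mulVec v
          = ∑ i ∈ Finset.range n, q.coeff i • ((A ^ (d - n + i) * B).mulVec v) := by
        rw [show (A ^ d * B).mulVec v = mulVecRightL n m v (A ^ d * B) from rfl, hAd,
          map_sum]
        refine Finset.sum_congr rfl fun i _ => ?_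
        rw [_root_.map_smul]; rfl
      rw [this]
      refine Submodule.sum_mem _ fun i hi => Submodule.smul_mem _ _ ?_
      have hi' := Finset.mem_range.mp hi
      exact IH _ (by omega)

theorem exp_mul_mulVec_mem (A : Matrix (Fin n) (Fin n) ℝ) (B : Matrix (Fin n) (Fin m) ℝ)
    (s : ℝ) (v : Fin m → ℝ) :
    ((NormedSpace.exp (s • A) * B).mulVec v) ∈ Kspace A B := by
  rw [← Matrix.mulVec_mulVec]
  refine exp_mulVec_mem A _ _ (fun k => ?_) s
  rw [Matrix.mulVec_mulVec]
  exact pow_mul_mulVec_mem A B k v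

/-- An interval integral of a function with values in a submodule stays in the submodule. -/
theorem intervalIntegral_mem (K : Submodule ℝ (Fin n → ℝ)) {f : ℝ → (Fin n → ℝ)} {a b : ℝ}
    (hf : IntervalIntegrable f volume a b) (hmem : ∀ τ, f τ ∈ K) :
    (∫ τ in a..b, f τ) ∈ K := by
  obtain ⟨Q, hQ⟩ := Submodule.exists_isCompl K
  set P : (Fin n → ℝ) →ₗ[ℝ] (Fin n → ℝ) := K.subtype.comp (K.projectionOnto Q hQ) with hP
  set Pc := LinearMap.toContinuousLinearMap P with hPc
  have h1 : ∀ τ, Pc (f τ) = f τ := by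
    intro τ
    show P (f τ) = f τ
    rw [hP]
    simp only [LinearMap.coe_comp, Function.comp_apply, Submodule.coe_subtype]
    rw [show f τ = ((⟨f τ, hmem τ⟩ : K) : Fin n → ℝ) from rfl,
      Submodule.projectionOnto_apply_left hQ]
  have h2 : (∫ τ in a..b, f τ) = Pc (∫ τ in a..b, f τ) := by
    rw [← Pc.intervalIntegral_comp_comm hf]
    exact intervalIntegral.integral_congr fun τ _ => (h1 τ).symm
  rw [h2]
  show P _ ∈ K
  rw [hP]
  simp only [LinearMap.coe_comp, Function.comp_apply, Submodule.coe_subtype]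
  exact Submodule.coe_mem _

/-- The reachable set at time 1. -/
def Reach (A : Matrix (Fin n) (Fin n) ℝ) (B : Matrix (Fin n) (Fin m) ℝ) :
    Submodule ℝ (Fin n → ℝ) where
  carrier := {x | ∃ u : ℝ → Fin m → ℝ, ValidInput A B 1 u ∧
    (∫ τ in (0:ℝ)..1, (NormedSpace.exp ((1 - τ) • A) * B).mulVec (u τ)) = x}
  zero_mem' := by
    refine ⟨0, ?_, ?_⟩
    · unfold ValidInput
      simp only [Pi.zero_apply, Matrix.mulVec_zero]
      exact intervalIntegrable_const
    · simp only [Pi.zero_apply, Matrix.mulVec_zero, intervalIntegral.integral_zero]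
  add_mem' := by
    rintro x y ⟨u, hu, rfl⟩ ⟨u', hu', rfl⟩
    refine ⟨u + u', ?_, ?_⟩
    · unfold ValidInput at *
      simp only [Pi.add_apply, Matrix.mulVec_add]
      exact hu.add hu'
    · simp only [Pi.add_apply, Matrix.mulVec_add]
      exact intervalIntegral.integral_add hu hu'
  smul_mem' := by
    rintro c x ⟨u, hu, rfl⟩
    refine ⟨c • u, ?_, ?_⟩
    · unfold ValidInput at *
      simp only [Pi.smul_apply, Matrix.mulVec_smul]
      exact hu.smul c
    · simp only [Pi.smul_apply, Matrix.mulVec_smul]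
      exact intervalIntegral.integral_smul c _

/-- Dual separation: if every functional killing `R` also kills `K`, then `K ≤ R`. -/
theorem le_of_dual (R K' : Submodule ℝ (Fin n → ℝ))
    (h : ∀ φ : Module.Dual ℝ (Fin n → ℝ), R ≤ LinearMap.ker φ → K' ≤ LinearMap.ker φ) :
    K' ≤ R := by
  intro x hx
  by_contra hxR
  have hq : R.mkQ x ≠ 0 := by
    simpa [Submodule.Quotient.mk_eq_zero] using hxR
  obtain ⟨ψ, hψ⟩ : ∃ ψ : Module.Dual ℝ ((Fin n → ℝ) ⧸ R), ψ (R.mkQ x) ≠ 0 := by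
    by_contra hall
    push_neg at hall
    exact hq ((Module.forall_dual_apply_eq_zero_iff ℝ _).mp hall)
  have hker : R ≤ LinearMap.ker (ψ ∘ₗ R.mkQ) := by
    intro r hr
    simp [LinearMap.mem_ker, (Submodule.Quotient.mk_eq_zero R).mpr hr]
  exact hψ (h (ψ ∘ₗ R.mkQ) hker hx)


def mulConstRightL (A : Matrix (Fin n) (Fin n) ℝ) (B : Matrix (Fin n) (Fin m) ℝ)
    (v : Fin m → ℝ) : Matrix (Fin n) (Fin n) ℝ →ₗ[ℝ] (Fin n → ℝ) where
  toFun := fun M => (M * B).mulVec v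
  map_add' := fun M N => by
    change ((M + N) * B).mulVec v = (M * B).mulVec v + (N * B).mulVec v
    rw [Matrix.add_mul, Matrix.add_mulVec]
  map_smul' := fun c M => by
    change ((c • M) * B).mulVec v = c • (M * B).mulVec v
    rw [Matrix.smul_mul, Matrix.smul_mulVec]

theorem K_le_reach (A : Matrix (Fin n) (Fin n) ℝ) (B : Matrix (Fin n) (Fin m) ℝ) :
    Kspace A B ≤ Reach A B := by
  refine le_of_dual _ _ fun φ hR => ?_
  have key : ∀ (v : Fin m → ℝ) (d : ℕ), φ ((A ^ d * B).mulVec v) = 0 := by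
    intro v
    set w : Fin n → ℝ := B.mulVec v with hw
    set E : ℝ → Matrix (Fin n) (Fin n) ℝ := fun s => NormedSpace.exp (s • A) with hE
    have hEcont : Continuous E :=
      NormedSpace.exp_continuous.comp (continuous_id.smul continuous_const)
    have hFcont : Continuous fun τ : ℝ => (E (1 - τ) * B).mulVec v := by
      have : (fun τ : ℝ => (E (1 - τ) * B).mulVec v)
          = fun τ : ℝ => LinearMap.toContinuousLinearMap (mulConstRightL A B v) (E (1 - τ)) :=
        rfl
      rw [this]
      exact (LinearMap.toContinuousLinearMap (mulConstRightL A B v)).continuous.comp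
        (hEcont.comp (continuous_const.sub continuous_id))
    set φc : (Fin n → ℝ) →L[ℝ] ℝ := LinearMap.toContinuousLinearMap φ with hφc
    have step1 : ∀ g : ℝ → ℝ, Continuous g →
        (∫ τ in (0:ℝ)..1, g τ * φ ((E (1 - τ) * B).mulVec v)) = 0 := by
      intro g hg
      have heq : ∀ τ : ℝ, (NormedSpace.exp ((1 - τ) • A) * B).mulVec (g τ • v)
          = g τ • ((E (1 - τ) * B).mulVec v) := fun τ => Matrix.mulVec_smul _ _ _
      have hint : Continuous fun τ : ℝ =>
          (NormedSpace.exp ((1 - τ) • A) * B).mulVec (g τ • v) := by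
        simp only [heq]; exact hg.smul hFcont
      have hvalid : ValidInput A B 1 (fun τ => g τ • v) := by
        unfold ValidInput
        exact hint.intervalIntegrable 0 1
      have hmem : (∫ τ in (0:ℝ)..1,
          (NormedSpace.exp ((1 - τ) • A) * B).mulVec (g τ • v)) ∈ Reach A B :=
        ⟨fun τ => g τ • v, hvalid, rfl⟩
      have h0 : φc (∫ τ in (0:ℝ)..1,
          (NormedSpace.exp ((1 - τ) • A) * B).mulVec (g τ • v)) = 0 := hR hmem
      have hvalid' : IntervalIntegrable
          (fun τ => (NormedSpace.exp ((1 - τ) • A) * B).mulVec (g τ • v)) volume 0 1 :=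
        hvalid
      have hcomm : (∫ τ in (0:ℝ)..1,
            φc ((NormedSpace.exp ((1 - τ) • A) * B).mulVec (g τ • v)))
          = φc (∫ τ in (0:ℝ)..1, (NormedSpace.exp ((1 - τ) • A) * B).mulVec (g τ • v)) :=
        ContinuousLinearMap.intervalIntegral_comp_comm φc hvalid'
      rw [← hcomm] at h0
      refine Eq.trans ?_ h0
      apply intervalIntegral.integral_congr
      intro τ _
      show g τ * φ ((E (1 - τ) * B).mulVec v)
        = φc ((NormedSpace.exp ((1 - τ) • A) * B).mulVec (g τ • v))
      rw [heq τ, _root_.map_smul]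
      rfl
    set h : ℝ → ℝ := fun τ => φ ((E (1 - τ) * B).mulVec v) with hh
    have hhc : Continuous h := φc.continuous.comp hFcont
    have hzero : ∀ τ ∈ Set.Icc (0:ℝ) 1, h τ = 0 := by
      intro τ hτ
      by_contra hne
      have hpos : (0:ℝ) < ∫ x in (0:ℝ)..1, h x * h x :=
        intervalIntegral.integral_pos one_pos ((hhc.mul hhc).continuousOn)
          (fun x _ => mul_self_nonneg _) ⟨τ, hτ, mul_self_pos.mpr hne⟩
      rw [step1 h hhc] at hpos
      exact lt_irrefl 0 hpos
    have hψ : ∀ d : ℕ, ∀ s ∈ Set.Ioo (0:ℝ) 1, φ ((A ^ d * E s).mulVec w) = 0 := by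
      intro d
      induction d with
      | zero =>
        intro s hs
        have h1 : h (1 - s) = 0 := hzero _ ⟨by linarith [hs.2], by linarith [hs.1]⟩
        have h2 : (E (1 - (1 - s)) * B).mulVec v = (A ^ 0 * E s).mulVec w := by
          rw [show (1:ℝ) - (1 - s) = s by ring, pow_zero, Matrix.one_mul, hw,
            Matrix.mulVec_mulVec]
        rw [hh] at h1
        simp only at h1
        rw [← h2]
        exact h1
      | succ d IH =>
        intro s hs
        have comm : Commute A (E s) := ((Commute.refl A).smul_right s).exp_right
        have hder : HasDerivAt (fun s' => φ ((A ^ d * E s').mulVec w))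
            (φ ((A ^ (d + 1) * E s).mulVec w)) s := by
          have h1 : HasDerivAt E (E s * A) s := hasDerivAt_exp_smul_const A s
          have h2 : HasDerivAt (fun s' => A ^ d * E s') (A ^ d * (E s * A)) s :=
            h1.const_mul (A ^ d)
          have h3 := (LinearMap.toContinuousLinearMap
            (φ ∘ₗ mulVecRightL n n w)).hasFDerivAt.comp_hasDerivAt s h2
          have h4 : A ^ d * (E s * A) = A ^ (d + 1) * E s := by
            rw [← comm.eq, ← mul_assoc, ← pow_succ]
          rw [h4] at h3
          exact h3
        have hloc : (fun _ : ℝ => (0:ℝ)) =ᶠ[nhds s] fun s' => φ ((A ^ d * E s').mulVec w) :=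
          Filter.eventuallyEq_of_mem (isOpen_Ioo.mem_nhds hs) fun x hx => (IH x hx).symm
        have hder0 : HasDerivAt (fun _ : ℝ => (0:ℝ)) (φ ((A ^ (d + 1) * E s).mulVec w)) s :=
          hder.congr_of_eventuallyEq hloc
        exact (hder0.unique (hasDerivAt_const s 0))
    have hhalf : ∀ d : ℕ, φ ((A ^ d * E (1/2)).mulVec w) = 0 :=
      fun d => hψ d (1/2) ⟨by norm_num, by norm_num⟩
    set Z : Submodule ℝ (Fin n → ℝ) :=
      ⨅ d : ℕ, LinearMap.ker (φ ∘ₗ Matrix.mulVecLin (A ^ d)) with hZ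
    have memZ : ∀ x : Fin n → ℝ, x ∈ Z ↔ ∀ d : ℕ, φ ((A ^ d).mulVec x) = 0 := by
      intro x
      simp [hZ, Submodule.mem_iInf, LinearMap.mem_ker, Matrix.mulVecLin_apply]
    have hzZ : (E (1/2)).mulVec w ∈ Z := by
      rw [memZ]
      intro d
      rw [Matrix.mulVec_mulVec]
      exact hhalf d
    have hAZ : ∀ (x : Fin n → ℝ), x ∈ Z → ∀ k : ℕ, (A ^ k).mulVec x ∈ Z := by
      intro x hx k
      rw [memZ] at hx ⊢
      intro d
      rw [Matrix.mulVec_mulVec, ← pow_add]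
      exact hx (d + k)
    have hEZ : (E (-(1/2))).mulVec ((E (1/2)).mulVec w) ∈ Z :=
      exp_mulVec_mem A Z _ (hAZ _ hzZ) (-(1/2))
    have hwZ : w ∈ Z := by
      have hinv : E (-(1/2)) * E (1/2) = 1 := by
        rw [hE]
        simp only
        rw [← Matrix.exp_add_of_commute _ _ (((Commute.refl A).smul_right (1/2 : ℝ)).smul_left (-(1/2) : ℝ))]
        rw [← add_smul]
        norm_num
      rwa [Matrix.mulVec_mulVec, hinv, Matrix.one_mulVec] at hEZ
    intro d
    rw [← Matrix.mulVec_mulVec]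
    exact (memZ w).mp hwZ d
  intro x hx
  obtain ⟨y, rfl⟩ := hx
  rw [LinearMap.mem_ker]
  have hy : Matrix.mulVecLin (ctrb A B) y
      = ∑ p : Fin n × Fin m, y p • Matrix.mulVecLin (ctrb A B) (Pi.single p 1) := by
    conv_lhs => rw [← Finset.univ_sum_single y]
    rw [map_sum]
    refine Finset.sum_congr rfl fun p _ => ?_
    have hsingle : (Pi.single p (y p) : Fin n × Fin m → ℝ)
        = y p • (Pi.single p 1 : Fin n × Fin m → ℝ) := by
      rw [← Pi.single_smul, smul_eq_mul, mul_one]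
    rw [hsingle, _root_.map_smul]
  rw [hy, map_sum]
  refine Finset.sum_eq_zero fun p _ => ?_
  rw [_root_.map_smul, smul_eq_mul]
  have hcol : Matrix.mulVecLin (ctrb A B) (Pi.single p 1)
      = (A ^ (p.1 : ℕ) * B).mulVec (Pi.single p.2 1) := by
    funext i
    rw [Matrix.mulVecLin_apply]
    show (∑ p' : Fin n × Fin m, ctrb A B i p' * (Pi.single p (1:ℝ) : Fin n × Fin m → ℝ) p')
      = ∑ j : Fin m, (A ^ (p.1 : ℕ) * B) i j * (Pi.single p.2 (1:ℝ) : Fin m → ℝ) j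
    rw [Finset.sum_eq_single p]
    · rw [Finset.sum_eq_single p.2]
      · simp [ctrb]
      · intro j _ hj; simp [Pi.single_apply, hj]
      · simp
    · intro p' _ hp'; simp [Pi.single_apply, hp']
    · simp
  rw [hcol, key]
  ring

theorem main_iff (A : Matrix (Fin n) (Fin n) ℝ) (B : Matrix (Fin n) (Fin m) ℝ) :
    Herdable A B Set.univ ↔
      ∃ k : Fin n → ℝ, (∃ y : Fin n × Fin m → ℝ, (ctrb A B).mulVec y = k) ∧
        ∀ i : Fin n, 0 < k i := by
  constructor
  · intro hH
    obtain ⟨tf, htf, u, hu, hx⟩ := hH 0 1 zero_le_one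
    have hkK : stateAt A B 0 u tf ∈ Kspace A B := by
      unfold stateAt
      rw [Matrix.mulVec_zero, zero_add]
      exact intervalIntegral_mem _ hu (fun τ => exp_mul_mulVec_mem A B _ (u τ))
    obtain ⟨y, hy⟩ := hkK
    exact ⟨stateAt A B 0 u tf, ⟨y, hy⟩,
      fun i => lt_of_lt_of_le one_pos (hx i (Set.mem_univ i))⟩
  · rintro ⟨k, ⟨y, hy⟩, hkpos⟩
    intro x0 h hh
    have hkR : k ∈ Reach A B := K_le_reach A B ⟨y, by rw [Matrix.mulVecLin_apply, hy]⟩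
    obtain ⟨u, huV, huI⟩ := hkR
    set e : Fin n → ℝ := (NormedSpace.exp ((1:ℝ) • A)).mulVec x0 with he
    set c : ℝ := ∑ i, |(h - e i) / k i| with hc
    have hci : ∀ i, h - e i ≤ c * k i := by
      intro i
      have h1 : (h - e i) / k i ≤ c :=
        (le_abs_self _).trans (Finset.single_le_sum
          (f := fun j => |(h - e j) / k j|) (fun j _ => abs_nonneg _) (Finset.mem_univ i))
      have h2 : ((h - e i) / k i) * k i = h - e i :=
        div_mul_cancel₀ _ (ne_of_gt (hkpos i))
      rw [← h2]
      exact mul_le_mul_of_nonneg_right h1 (le_of_lt (hkpos i))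
    refine ⟨1, one_pos, c • u, ?_, ?_⟩
    · unfold ValidInput at huV ⊢
      simp only [Pi.smul_apply, Matrix.mulVec_smul]
      exact huV.smul c
    · intro i _
      have hst : stateAt A B x0 (c • u) 1 = e + c • k := by
        unfold stateAt
        rw [← he]
        congr 1
        rw [← huI, ← intervalIntegral.integral_smul]
        refine intervalIntegral.integral_congr fun τ _ => ?_
        simp [Matrix.mulVec_smul]
      rw [hst]
      have := hci i
      simp only [Pi.add_apply, Pi.smul_apply, smul_eq_mul]
      linarith


end HerdThm

/-- The system is completely herdable iff the range of the controllability matrix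
contains an entrywise positive vector. -/
theorem completelyHerdable_iff_range_ctrb_pos {n m : ℕ}
    (A : Matrix (Fin n) (Fin n) ℝ) (B : Matrix (Fin n) (Fin m) ℝ) :
    Herdable A B Set.univ ↔
      ∃ k : Fin n → ℝ, (∃ y : Fin n × Fin m → ℝ, (ctrb A B).mulVec y = k) ∧
        ∀ i : Fin n, 0 < k i := by
  exact HerdThm.main_iff A B
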